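/- Suppose X ∈ L(A) is a modular element of the intersection lattice of a central arrangement A. If A is formal, then the localization A_X is formal. -/

import Mathlib

open Submodule

section ArrangementBasics

variable {𝕂 : Type*} [Field 𝕂] {V : Type*} [AddCommGroup V] [Module 𝕂 V]

/-- `H` is a (linear) hyperplane: the kernel of a nonzero linear form. -/
def IsHyperplane (H : Submodule 𝕂 V) : Prop :=
  ∃ f : Module.Dual 𝕂 V, f ≠ 0 ∧ LinearMap.ker f = H

/-- A central arrangement: a finite set of linear hyperplanes. -/
def IsArrangement (A : Set (Submodule 𝕂 V)) : Prop :=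
  A.Finite ∧ ∀ H ∈ A, IsHyperplane H

/-- The intersection lattice `L(A)`: all intersections of subsets of `A`
(with the ambient space `⊤ = sInf ∅` included). -/
def interLattice (A : Set (Submodule 𝕂 V)) : Set (Submodule 𝕂 V) :=
  {X | ∃ B ⊆ A, X = sInf B}

/-- The rank of an intersection: its codimension in the ambient space. -/
noncomputable def rk (X : Submodule 𝕂 V) : ℕ := Module.finrank 𝕂 (V ⧸ X)

/-- The localization `A_X` of `A` at `X`: all hyperplanes of `A` containing `X`. -/
def locz (A : Set (Submodule 𝕂 V)) (X : Submodule 𝕂 V) : Set (Submodule 𝕂 V) :=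
  {H | H ∈ A ∧ X ≤ H}

/-- The restriction `A^Z` of `A` to `Z`, an arrangement in (the vector space) `Z`:
the subspaces `Z ∩ H` for `H ∈ A ∖ A_Z`, viewed as submodules of `Z`. -/
def restr (A : Set (Submodule 𝕂 V)) (Z : Submodule 𝕂 V) : Set (Submodule 𝕂 ↥Z) :=
  {K | ∃ H ∈ A, ¬ Z ≤ H ∧ K = (Z ⊓ H).comap Z.subtype}

/-- `α` is a choice of defining linear forms for the arrangement `A`. -/
def IsDefiningForms (A : Set (Submodule 𝕂 V)) (α : Submodule 𝕂 V → Module.Dual 𝕂 V) : Prop :=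
  ∀ H ∈ A, LinearMap.ker (α H) = H

/-- The relation space `F(A)` with respect to the chosen defining forms `α`:
the kernel of `⊕_{H ∈ A} 𝕂·e_H → V*`, `e_H ↦ α_H`, realized as the space of finitely
supported coefficient functions supported on `A` whose linear combination vanishes. -/
noncomputable def relSpace (A : Set (Submodule 𝕂 V)) (α : Submodule 𝕂 V → Module.Dual 𝕂 V) :
    Submodule 𝕂 (Submodule 𝕂 V →₀ 𝕂) :=
  Finsupp.supported 𝕂 𝕂 A ⊓ LinearMap.ker (Finsupp.linearCombination 𝕂 α)

/-- `F_2(A)`: the span of the elements of `F(A)` of length at most `3`. -/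
noncomputable def relSpace2 (A : Set (Submodule 𝕂 V)) (α : Submodule 𝕂 V → Module.Dual 𝕂 V) :
    Submodule 𝕂 (Submodule 𝕂 V →₀ 𝕂) :=
  Submodule.span 𝕂 {c | c ∈ relSpace A α ∧ c.support.card ≤ 3}

/-- `A` is formal if `F_2(A) = F(A)` (for any choice of defining forms). -/
def IsFormal (A : Set (Submodule 𝕂 V)) : Prop :=
  ∀ α : Submodule 𝕂 V → Module.Dual 𝕂 V,
    IsDefiningForms A α → relSpace2 A α = relSpace A α

end ArrangementBasics


/-- An element `X ∈ L(A)` is modular if `X + Y ∈ L(A)` for every `Y ∈ L(A)`. -/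
def IsModular {𝕂 : Type*} [Field 𝕂] {V : Type*} [AddCommGroup V] [Module 𝕂 V]
    (A : Set (Submodule 𝕂 V)) (X : Submodule 𝕂 V) : Prop :=
  ∀ Y ∈ interLattice A, X ⊔ Y ∈ interLattice A


section AuxLemmas

variable {𝕂 : Type*} [Field 𝕂] {V : Type*} [AddCommGroup V] [Module 𝕂 V]

set_option linter.unusedSectionVars false

lemma top_mem_interLattice (A : Set (Submodule 𝕂 V)) : ⊤ ∈ interLattice A :=
  ⟨∅, by simp, by simp⟩

lemma inf_mem_interLattice {A : Set (Submodule 𝕂 V)} {Y : Submodule 𝕂 V}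
    (hY : Y ∈ interLattice A) {H : Submodule 𝕂 V} (hH : H ∈ A) :
    Y ⊓ H ∈ interLattice A := by
  obtain ⟨B, hB, rfl⟩ := hY
  exact ⟨insert H B, Set.insert_subset hH hB, by rw [sInf_insert, inf_comm]⟩

variable [FiniteDimensional 𝕂 V]

lemma hyperplane_finrank {H : Submodule 𝕂 V} (h : IsHyperplane H) :
    Module.finrank 𝕂 H + 1 = Module.finrank 𝕂 V := by
  obtain ⟨f, hf, rfl⟩ := h
  have hrange : LinearMap.range f = ⊤ := by
    obtain ⟨v, hv⟩ : ∃ v, f v ≠ 0 := by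
      by_contra h; push_neg at h; exact hf (LinearMap.ext fun v => h v)
    rw [eq_top_iff]
    intro c _
    exact ⟨(c / f v) • v, by simp [map_smul, smul_eq_mul, div_mul_cancel₀ _ hv]⟩
  have h2 := LinearMap.finrank_range_add_finrank_ker f
  rw [hrange, finrank_top] at h2
  simp only [Module.finrank_self] at h2
  omega

lemma exists_lattice_complement (A : Set (Submodule 𝕂 V)) (hA : IsArrangement A)
    (X : Submodule 𝕂 V) :
    ∃ Y ∈ interLattice A, X ⊔ Y = ⊤ ∧ ∀ H ∈ A, X ⊓ Y ≤ H := by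
  suffices h : ∀ k, ∀ Y ∈ interLattice A, X ⊔ Y = ⊤ → Module.finrank 𝕂 ↥(X ⊓ Y) ≤ k →
      ∃ Y' ∈ interLattice A, X ⊔ Y' = ⊤ ∧ ∀ H ∈ A, X ⊓ Y' ≤ H by
    exact h (Module.finrank 𝕂 ↥(X ⊓ (⊤ : Submodule 𝕂 V))) ⊤ (top_mem_interLattice A)
      (by simp) le_rfl
  intro k
  induction k with
  | zero =>
    intro Y hY hsup hrk
    refine ⟨Y, hY, hsup, fun H hH => ?_⟩
    have : X ⊓ Y = ⊥ := Submodule.finrank_eq_zero.mp (Nat.le_zero.mp hrk)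
    simp [this]
  | succ k ih =>
    intro Y hY hsup hrk
    by_cases hall : ∀ H ∈ A, X ⊓ Y ≤ H
    · exact ⟨Y, hY, hsup, hall⟩
    push_neg at hall
    obtain ⟨H, hH, hnle⟩ := hall
    have hYH : Y ⊓ H ∈ interLattice A := inf_mem_interLattice hY hH
    have e1 : Module.finrank 𝕂 ↥(X ⊔ (Y ⊓ H)) + Module.finrank 𝕂 ↥(X ⊓ (Y ⊓ H))
        = Module.finrank 𝕂 X + Module.finrank 𝕂 ↥(Y ⊓ H) :=
      Submodule.finrank_sup_add_finrank_inf_eq _ _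
    have e2 : Module.finrank 𝕂 ↥(Y ⊔ H) + Module.finrank 𝕂 ↥(Y ⊓ H)
        = Module.finrank 𝕂 Y + Module.finrank 𝕂 H :=
      Submodule.finrank_sup_add_finrank_inf_eq _ _
    have e3 : Module.finrank 𝕂 H + 1 = Module.finrank 𝕂 V := hyperplane_finrank (hA.2 H hH)
    have e4 : Module.finrank 𝕂 ↥(Y ⊔ H) ≤ Module.finrank 𝕂 V := Submodule.finrank_le _
    have e5 : Module.finrank 𝕂 ↥(X ⊔ Y) + Module.finrank 𝕂 ↥(X ⊓ Y)
        = Module.finrank 𝕂 X + Module.finrank 𝕂 Y :=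
      Submodule.finrank_sup_add_finrank_inf_eq _ _
    have e6 : Module.finrank 𝕂 ↥(X ⊔ Y) = Module.finrank 𝕂 V := by
      rw [hsup]; exact finrank_top 𝕂 V
    have e7 : X ⊓ (Y ⊓ H) < X ⊓ Y := by
      refine lt_of_le_of_ne (inf_le_inf_left X inf_le_left) (fun he => hnle ?_)
      conv_lhs => rw [← he]
      exact le_trans inf_le_right inf_le_right
    have e8 : Module.finrank 𝕂 ↥(X ⊓ (Y ⊓ H)) < Module.finrank 𝕂 ↥(X ⊓ Y) :=
      Submodule.finrank_lt_finrank_of_lt e7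
    have e9 : Module.finrank 𝕂 ↥(X ⊔ (Y ⊓ H)) ≤ Module.finrank 𝕂 V := Submodule.finrank_le _
    have htop : X ⊔ (Y ⊓ H) = ⊤ := Submodule.eq_top_of_finrank_eq (by omega)
    exact ih (Y ⊓ H) hYH htop (by omega)

lemma exists_compl_le {X Y : Submodule 𝕂 V} (hsup : X ⊔ Y = ⊤) :
    ∃ D ≤ X, IsCompl Y D := by
  obtain ⟨q, hq⟩ := Submodule.exists_isCompl ((X ⊓ Y).comap X.subtype)
  refine ⟨q.map X.subtype, Submodule.map_subtype_le X q, ?_, ?_⟩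
  · rw [disjoint_iff_inf_le]
    rintro v ⟨hvY, hvD⟩
    obtain ⟨⟨x, hxX⟩, hxq, rfl⟩ := hvD
    have hxp : (⟨x, hxX⟩ : X) ∈ (X ⊓ Y).comap X.subtype := by
      simp only [Submodule.mem_comap, Submodule.coe_subtype]
      exact ⟨hxX, hvY⟩
    have h0 : (⟨x, hxX⟩ : X) = 0 :=
      Submodule.disjoint_def.mp hq.disjoint ⟨x, hxX⟩ hxp hxq
    have : x = 0 := congrArg Subtype.val h0
    simp [this]
  · rw [codisjoint_iff, eq_top_iff, ← hsup]
    refine sup_le (fun x hx => ?_) le_sup_left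
    have hxtop : (⟨x, hx⟩ : X) ∈ (X ⊓ Y).comap X.subtype ⊔ q := by
      rw [codisjoint_iff.mp hq.codisjoint]; trivial
    obtain ⟨a, ha, b, hb, hab⟩ := Submodule.mem_sup.mp hxtop
    have hax : ((a : V) : V) ∈ Y := by
      have := Submodule.mem_comap.mp ha
      exact this.2
    have hbx : (b : V) ∈ Submodule.map X.subtype q := ⟨b, hb, rfl⟩
    have : x = (a : V) + (b : V) := by
      have := congrArg Subtype.val hab
      simpa using this.symm
    rw [this]
    exact Submodule.add_mem _ (Submodule.mem_sup_left hax) (Submodule.mem_sup_right hbx)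
lemma exists_smul_of_ker_le_ker {f g : Module.Dual 𝕂 V} (hg : g ≠ 0)
    (h : LinearMap.ker g ≤ LinearMap.ker f) : ∃ t : 𝕂, f = t • g := by
  obtain ⟨v, hv⟩ : ∃ v, g v ≠ 0 := by
    by_contra hc; push_neg at hc; exact hg (LinearMap.ext fun v => hc v)
  refine ⟨f v / g v, LinearMap.ext fun w => ?_⟩
  have hw : w - (g w / g v) • v ∈ LinearMap.ker g := by
    simp [map_sub, map_smul, smul_eq_mul, div_mul_cancel₀ _ hv]
  have hfw := h hw
  simp only [LinearMap.mem_ker, map_sub, map_smul, smul_eq_mul, sub_eq_zero] at hfw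
  rw [LinearMap.smul_apply, smul_eq_mul, hfw]
  field_simp

lemma linearCombination_congr_on {s : Set (Submodule 𝕂 V)}
    {α α' : Submodule 𝕂 V → Module.Dual 𝕂 V}
    (h : ∀ H ∈ s, α H = α' H) {c : Submodule 𝕂 V →₀ 𝕂}
    (hc : c ∈ Finsupp.supported 𝕂 𝕂 s) :
    Finsupp.linearCombination 𝕂 α c = Finsupp.linearCombination 𝕂 α' c := by
  rw [Finsupp.linearCombination_apply, Finsupp.linearCombination_apply]
  apply Finsupp.sum_congr
  intro H hH
  rw [h H ((Finsupp.mem_supported 𝕂 c).mp hc hH)]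

lemma key_step {A : Set (Submodule 𝕂 V)} (hA : IsArrangement A)
    {X : Submodule 𝕂 V} (hmod : IsModular A X)
    {Y D : Submodule 𝕂 V} (hY : Y ∈ interLattice A) (hsup : X ⊔ Y = ⊤)
    (hXY : ∀ H ∈ A, X ⊓ Y ≤ H) (hDX : D ≤ X) (hcompl : IsCompl Y D)
    {α : Submodule 𝕂 V → Module.Dual 𝕂 V} (hα : IsDefiningForms (locz A X) α)
    {α' : Submodule 𝕂 V → Module.Dual 𝕂 V} (hα' : IsDefiningForms A α')
    (hagree : ∀ H ∈ locz A X, α' H = α H)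
    {H : Submodule 𝕂 V} (hH : H ∈ A) :
    ∃ d : Submodule 𝕂 V →₀ 𝕂, ↑d.support ⊆ locz A X ∧ d.support.card ≤ 1 ∧
      Finsupp.linearCombination 𝕂 α d
        = (α' H).comp (Y.subtype.comp (Y.projectionOnto D hcompl)) ∧
      (H ∈ locz A X → d = Finsupp.single H 1) := by
  set π : V →ₗ[𝕂] V := Y.subtype.comp (Y.projectionOnto D hcompl) with hπ
  -- basic facts about π
  have hπY : ∀ y ∈ Y, π y = y := by
    intro y hy
    show (Y.subtype) (Y.projectionOnto D hcompl ((⟨y, hy⟩ : Y) : V)) = y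
    rw [Submodule.projectionOnto_apply_left]
    rfl
  have hπmem : ∀ v, π v ∈ Y := fun v => (Y.projectionOnto D hcompl v).2
  have hπsub : ∀ v, v - π v ∈ D := by
    intro v
    have hv : v ∈ Y ⊔ D := by rw [codisjoint_iff.mp hcompl.codisjoint]; trivial
    obtain ⟨y, hy, d, hd, rfl⟩ := Submodule.mem_sup.mp hv
    have : π (y + d) = y := by
      have hd0 : π d = 0 := by
        show (Y.subtype) (Y.projectionOnto D hcompl ((⟨d, hd⟩ : D) : V)) = 0
        rw [Submodule.projectionOnto_apply_right]; rfl
      rw [map_add, hπY y hy, hd0, add_zero]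
    rw [this]; simpa using hd
  have hPfix : ∀ f : Module.Dual 𝕂 V, X ≤ LinearMap.ker f → f.comp π = f := by
    intro f hf
    ext v
    have : f (v - π v) = 0 := hf (hDX (hπsub v))
    simp only [map_sub, sub_eq_zero] at this
    simpa using this.symm
  by_cases hHl : H ∈ locz A X
  · refine ⟨Finsupp.single H 1, ?_, ?_, ?_, fun _ => rfl⟩
    · intro x hx
      have hxH := Finset.mem_singleton.mp
        (Finsupp.support_single_subset (Finset.mem_coe.mp hx))
      exact hxH ▸ hHl
    · exact le_trans (Finset.card_le_card Finsupp.support_single_subset) (by simp)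
    · rw [Finsupp.linearCombination_single, one_smul, hagree H hHl,
        hPfix (α H) (by rw [hα H hHl]; exact hHl.2)]
  -- main case
  set f : Module.Dual 𝕂 V := (α' H).comp π with hf
  by_cases hf0 : f = 0
  · exact ⟨0, by simp, by simp, by rw [map_zero, hf0], fun h => absurd h hHl⟩
  have hXker : X ≤ LinearMap.ker f := by
    intro x hx
    have h1 : π x ∈ X ⊓ Y := by
      refine ⟨?_, hπmem x⟩
      have := hπsub x
      have : x - (x - π x) ∈ X := Submodule.sub_mem X hx (hDX this)
      simpa using this
    have h2 : π x ∈ H := hXY H hH h1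
    show (α' H) (π x) = 0
    rw [← hα' H hH] at h2
    exact h2
  have hYHker : Y ⊓ H ≤ LinearMap.ker f := by
    intro v hv
    obtain ⟨hvY, hvH⟩ := Submodule.mem_inf.mp hv
    have hv0 : (α' H) v = 0 := by rw [← hα' H hH] at hvH; exact hvH
    show (α' H) (π v) = 0
    rw [hπY v hvY]
    exact hv0
  set Z : Submodule 𝕂 V := X ⊔ (Y ⊓ H) with hZ
  have hZL : Z ∈ interLattice A := hmod _ (inf_mem_interLattice hY hH)
  have hZker : Z ≤ LinearMap.ker f := sup_le hXker hYHker
  -- rank computations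
  have eK : Module.finrank 𝕂 (LinearMap.ker f) + 1 = Module.finrank 𝕂 V :=
    hyperplane_finrank ⟨f, hf0, rfl⟩
  have e1 : Module.finrank 𝕂 ↥(X ⊔ (Y ⊓ H)) + Module.finrank 𝕂 ↥(X ⊓ (Y ⊓ H))
      = Module.finrank 𝕂 X + Module.finrank 𝕂 ↥(Y ⊓ H) :=
    Submodule.finrank_sup_add_finrank_inf_eq _ _
  have hXinf : X ⊓ (Y ⊓ H) = X ⊓ Y :=
    le_antisymm (inf_le_inf_left _ inf_le_left)
      (le_inf inf_le_left (le_inf inf_le_right (hXY H hH)))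
  have e2 : Module.finrank 𝕂 ↥(Y ⊔ H) + Module.finrank 𝕂 ↥(Y ⊓ H)
      = Module.finrank 𝕂 Y + Module.finrank 𝕂 H :=
    Submodule.finrank_sup_add_finrank_inf_eq _ _
  have e3 : Module.finrank 𝕂 H + 1 = Module.finrank 𝕂 V := hyperplane_finrank (hA.2 H hH)
  have e4 : Module.finrank 𝕂 ↥(Y ⊔ H) ≤ Module.finrank 𝕂 V := Submodule.finrank_le _
  have e5 : Module.finrank 𝕂 ↥(X ⊔ Y) + Module.finrank 𝕂 ↥(X ⊓ Y)
      = Module.finrank 𝕂 X + Module.finrank 𝕂 Y :=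
    Submodule.finrank_sup_add_finrank_inf_eq _ _
  have e6 : Module.finrank 𝕂 ↥(X ⊔ Y) = Module.finrank 𝕂 V := by
    rw [hsup]; exact finrank_top 𝕂 V
  have eZk : Module.finrank 𝕂 Z ≤ Module.finrank 𝕂 (LinearMap.ker f) :=
    Submodule.finrank_mono hZker
  rw [hXinf] at e1
  rw [← hZ] at e1
  have hZkereq : Z = LinearMap.ker f := Submodule.eq_of_le_of_finrank_le hZker (by omega)
  -- find H' ∈ A with Z ≤ H'
  obtain ⟨B, hB, hZB⟩ := hZL
  have hBne : B.Nonempty := by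
    rcases Set.eq_empty_or_nonempty B with h | h
    · exfalso
      rw [h, sInf_empty] at hZB
      rw [hZB] at hZkereq
      exact hf0 (LinearMap.ker_eq_top.mp hZkereq.symm)
    · exact h
  obtain ⟨H', hH'B⟩ := hBne
  have hZH' : Z ≤ H' := by rw [hZB]; exact sInf_le hH'B
  have hH'A : H' ∈ A := hB hH'B
  have e3' : Module.finrank 𝕂 H' + 1 = Module.finrank 𝕂 V := hyperplane_finrank (hA.2 H' hH'A)
  have hZH'eq : Z = H' := Submodule.eq_of_le_of_finrank_le hZH' (by omega)
  have hH'locz : H' ∈ locz A X := ⟨hH'A, hZH'eq ▸ le_sup_left⟩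
  have hkerα : LinearMap.ker (α H') = H' := hα H' hH'locz
  have hαne : α H' ≠ 0 := by
    intro h0
    have hkt : LinearMap.ker f = ⊤ := by
      rw [← hZkereq, hZH'eq, ← hkerα, h0, LinearMap.ker_zero]
    exact hf0 (LinearMap.ker_eq_top.mp hkt)
  have hkle : LinearMap.ker (α H') ≤ LinearMap.ker f := by
    rw [hkerα, ← hZH'eq, hZkereq]
  obtain ⟨t, hft⟩ := exists_smul_of_ker_le_ker hαne hkle
  refine ⟨Finsupp.single H' t, ?_, ?_, ?_, fun h => absurd h hHl⟩
  · intro x hx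
    have hxH := Finset.mem_singleton.mp
      (Finsupp.support_single_subset (Finset.mem_coe.mp hx))
    exact hxH ▸ hH'locz
  · exact le_trans (Finset.card_le_card Finsupp.support_single_subset) (by simp)
  · rw [Finsupp.linearCombination_single, ← hft, hf]
theorem main_thm_aux {A : Set (Submodule 𝕂 V)} (hA : IsArrangement A)
    {X : Submodule 𝕂 V} (hmod : IsModular A X)
    (hformal : IsFormal A) :
    IsFormal (locz A X) := by
  classical
  intro α hα
  -- extend the defining forms to all of A
  set α' : Submodule 𝕂 V → Module.Dual 𝕂 V :=
    fun H => if X ≤ H then α H else if h : IsHyperplane H then h.choose else 0 with hα'def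
  have hagree : ∀ H ∈ locz A X, α' H = α H := by
    intro H hH
    simp only [hα'def, if_pos hH.2]
  have hα' : IsDefiningForms A α' := by
    intro H hHA
    by_cases hXH : X ≤ H
    · simp only [hα'def, if_pos hXH]
      exact hα H ⟨hHA, hXH⟩
    · have hh := hA.2 H hHA
      simp only [hα'def, if_neg hXH, dif_pos hh]
      exact hh.choose_spec.2
  obtain ⟨Y, hY, hsup, hXY⟩ := exists_lattice_complement A hA X
  obtain ⟨D, hDX, hcompl⟩ := exists_compl_le hsup
  set π : V →ₗ[𝕂] V := Y.subtype.comp (Y.projectionOnto D hcompl) with hπ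
  set P : Module.Dual 𝕂 V →ₗ[𝕂] Module.Dual 𝕂 V := LinearMap.lcomp 𝕂 𝕂 π with hP
  have key : ∀ H : Submodule 𝕂 V, ∃ d : Submodule 𝕂 V →₀ 𝕂,
      d.support.card ≤ 1 ∧
      (H ∈ A → ↑d.support ⊆ locz A X ∧ Finsupp.linearCombination 𝕂 α d = P (α' H)) ∧
      (H ∈ locz A X → d = Finsupp.single H 1) := by
    intro H
    by_cases hH : H ∈ A
    · obtain ⟨d, h1, h2, h3, h4⟩ := key_step hA hmod hY hsup hXY hDX hcompl hα hα' hagree hH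
      exact ⟨d, h2, fun _ => ⟨h1, h3⟩, h4⟩
    · exact ⟨0, by simp, fun h => absurd h hH, fun h => absurd h.1 hH⟩
  choose N hN1 hN2 hN3 using key
  set Φ : (Submodule 𝕂 V →₀ 𝕂) →ₗ[𝕂] (Submodule 𝕂 V →₀ 𝕂) :=
    Finsupp.lsum 𝕂 (fun H => LinearMap.toSpanSingleton 𝕂 _ (N H)) with hΦ
  have hΦsingle : ∀ H : Submodule 𝕂 V, ∀ a : 𝕂, Φ (Finsupp.single H a) = a • N H := by
    intro H a
    rw [hΦ, Finsupp.lsum_single, LinearMap.toSpanSingleton_apply]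
  -- (a) Φ fixes elements supported on locz A X
  have hfix : ∀ c ∈ Finsupp.supported 𝕂 𝕂 (locz A X), Φ c = c := by
    have hle : Finsupp.supported 𝕂 𝕂 (locz A X)
        ≤ LinearMap.eqLocus Φ (LinearMap.id (R := 𝕂) (M := Submodule 𝕂 V →₀ 𝕂)) := by
      rw [Finsupp.supported_eq_span_single]
      refine Submodule.span_le.mpr ?_
      rintro _ ⟨H, hH, rfl⟩
      show Φ (Finsupp.single H 1) = Finsupp.single H 1
      rw [hΦsingle, hN3 H hH, one_smul]
    exact fun c hc => hle hc
  -- (b) the kernel identity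
  have hker : ∀ c ∈ Finsupp.supported 𝕂 𝕂 A,
      Finsupp.linearCombination 𝕂 α (Φ c) = P (Finsupp.linearCombination 𝕂 α' c) := by
    have hle : Finsupp.supported 𝕂 𝕂 A ≤ LinearMap.eqLocus
        ((Finsupp.linearCombination 𝕂 α).comp Φ)
        (P.comp (Finsupp.linearCombination 𝕂 α')) := by
      rw [Finsupp.supported_eq_span_single]
      refine Submodule.span_le.mpr ?_
      rintro _ ⟨H, hH, rfl⟩
      show Finsupp.linearCombination 𝕂 α (Φ (Finsupp.single H 1))
        = P (Finsupp.linearCombination 𝕂 α' (Finsupp.single H 1))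
      rw [hΦsingle, one_smul, Finsupp.linearCombination_single, one_smul]
      exact (hN2 H hH).2
    exact fun c hc => hle hc
  -- (c) cardinality bound
  have hcard : ∀ c : Submodule 𝕂 V →₀ 𝕂, (Φ c).support.card ≤ c.support.card := by
    intro c
    have hΦc : Φ c = c.sum fun H a => a • N H := by
      rw [hΦ, Finsupp.lsum_apply]
      exact Finsupp.sum_congr fun H _ => by rw [LinearMap.toSpanSingleton_apply]
    rw [hΦc]
    calc (c.sum fun H a => a • N H).support.card
        ≤ (c.support.biUnion fun H => ((c H) • N H).support).card :=
          Finset.card_le_card Finsupp.support_sum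
      _ ≤ ∑ H ∈ c.support, ((c H) • N H).support.card := Finset.card_biUnion_le
      _ ≤ ∑ H ∈ c.support, 1 := by
          refine Finset.sum_le_sum fun H _ => ?_
          exact le_trans (Finset.card_le_card (Finsupp.support_smul)) (hN1 H)
      _ = c.support.card := by simp
  -- (d) support of image
  have hsupp : ∀ c ∈ Finsupp.supported 𝕂 𝕂 A, Φ c ∈ Finsupp.supported 𝕂 𝕂 (locz A X) := by
    intro c hc
    have hΦc : Φ c = c.sum fun H a => a • N H := by
      rw [hΦ, Finsupp.lsum_apply]
      exact Finsupp.sum_congr fun H _ => by rw [LinearMap.toSpanSingleton_apply]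
    rw [Finsupp.mem_supported, hΦc]
    intro x hx
    obtain ⟨H, hHs, hxs⟩ := Finset.mem_biUnion.mp (Finsupp.support_sum (Finset.mem_coe.mp hx))
    have hHA : H ∈ A := (Finsupp.mem_supported 𝕂 c).mp hc hHs
    exact (hN2 H hHA).1 (Finsupp.support_smul hxs)
  -- Φ maps F(A) into F(A_X)
  have hΦrel : ∀ c ∈ relSpace A α', Φ c ∈ relSpace (locz A X) α := by
    intro c hc
    refine ⟨hsupp c hc.1, ?_⟩
    show Finsupp.linearCombination 𝕂 α (Φ c) = 0
    rw [hker c hc.1]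
    have : Finsupp.linearCombination 𝕂 α' c = 0 := hc.2
    rw [this, map_zero]
  -- conclude
  refine le_antisymm ?_ ?_
  · exact Submodule.span_le.mpr fun c hc => hc.1
  · intro c hc
    have hcA : c ∈ relSpace A α' := by
      refine ⟨Finsupp.supported_mono (fun H hH => hH.1) hc.1, ?_⟩
      show Finsupp.linearCombination 𝕂 α' c = 0
      rw [← linearCombination_congr_on (fun H hH => (hagree H hH).symm) hc.1]
      exact hc.2
    have hc2 : c ∈ relSpace2 A α' := by rw [hformal α' hα']; exact hcA
    have hΦc : Φ c ∈ Submodule.map Φ (relSpace2 A α') := Submodule.mem_map_of_mem hc2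
    rw [relSpace2, Submodule.map_span] at hΦc
    have hspan : Submodule.span 𝕂 (Φ '' {d | d ∈ relSpace A α' ∧ d.support.card ≤ 3})
        ≤ relSpace2 (locz A X) α := by
      refine Submodule.span_le.mpr ?_
      rintro _ ⟨d, ⟨hd1, hd2⟩, rfl⟩
      exact Submodule.subset_span ⟨hΦrel d hd1, le_trans (hcard d) hd2⟩
    have := hspan hΦc
    rwa [hfix c hc.1] at this

end AuxLemmas

/-- **Corollary 5.2** (`cor:modular-formal`): if `X ∈ L(A)` is modular and the central
arrangement `A` is formal, then so is the localization `A_X`. -/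
theorem formal_localization_at_modular {𝕂 : Type*} [Field 𝕂] {ℓ : ℕ}
    (A : Set (Submodule 𝕂 (Fin ℓ → 𝕂))) (hA : IsArrangement A)
    (X : Submodule 𝕂 (Fin ℓ → 𝕂)) (hX : X ∈ interLattice A) (hmod : IsModular A X)
    (hformal : IsFormal A) :
    IsFormal (locz A X) := by
  exact main_thm_aux hA hmod hformal
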